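/- Let κ be an infinite cardinal, F a proper filter on κ, Π a collection of partitions of κ polyconsistent with F, and J ⊆ κ. Then either (a) Π is polyconsistent with the filter generated by F ∪ {J}, or (b) there is a finite subset Π₀ ⊆ Π such that Π \ Π₀ is polyconsistent with the filter generated by F ∪ {κ \ J}. -/

import Mathlib

open Cardinal

universe u

/-- A partition of `α`: a set of pairwise disjoint nonempty subsets covering `α`. -/
def IsPartition {α : Type u} (P : Set (Set α)) : Prop :=
  (∀ C ∈ P, C.Nonempty) ∧ (∀ C ∈ P, ∀ D ∈ P, C ≠ D → C ∩ D = ∅) ∧ ⋃₀ P = Set.univ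

/-- A polycell of a collection `Ps` of partitions: an intersection of one cell from
each of finitely many (at least one) distinct partitions in `Ps`. -/
def IsPolycell {α : Type u} (Ps : Set (Set (Set α))) (C : Set α) : Prop :=
  ∃ t : Finset (Set (Set α)), (t : Set (Set (Set α))) ⊆ Ps ∧ t.Nonempty ∧
    ∃ c : Set (Set α) → Set α, (∀ P ∈ t, c P ∈ P) ∧ C = ⋂ P ∈ t, c P

/-- `con F`: the sets meeting every member of the filter `F`. -/
def conF {α : Type u} (F : Filter α) : Set (Set α) :=
  {y : Set α | ∀ x ∈ F, (x ∩ y).Nonempty}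

/-- `Ps` is polyconsistent with `F` if every polycell of `Ps` is consistent with `F`. -/
def Polyconsistent {α : Type u} (Ps : Set (Set (Set α))) (F : Filter α) : Prop :=
  ∀ C : Set α, IsPolycell Ps C → C ∈ conF F

/-- If `F` is a proper filter on an infinite cardinal `κ`, `Ps` a
collection of partitions of `κ` polyconsistent with `F`, and `J ⊆ κ`, then either
`Ps` is polyconsistent with the filter generated by `F ∪ {J}`, or some cofinite
subcollection `Ps \ Ps₀` (`Ps₀` finite) is polyconsistent with the filter generated
by `F ∪ {κ \ J}`. -/

lemma gen_aux {α : Type u} (F : Filter α) (A : Set α) {S : Set α}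
    (hS : S ∈ Filter.generate (F.sets ∪ {A})) : ∃ X ∈ F, X ∩ A ⊆ S := by
  rw [Filter.mem_generate_iff] at hS
  obtain ⟨t, hts, htf, hsub⟩ := hS
  refine ⟨⋂₀ (t \ {A}), ?_, ?_⟩
  · refine (Filter.sInter_mem htf.diff).mpr (fun s hs => ?_)
    rcases hts hs.1 with h | h
    · exact h
    · exact absurd h hs.2
  · intro x hx
    apply hsub
    intro s hs
    by_cases hsA : s = A
    · exact hsA ▸ hx.2
    · exact hx.1 s ⟨hs, hsA⟩

theorem stmt_10 (κ : Cardinal.{u}) (hκ : Cardinal.aleph0 ≤ κ)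
    (F : Filter κ.out) (hF : F.NeBot)
    (Ps : Set (Set (Set κ.out)))
    (hPs : ∀ P ∈ Ps, IsPartition P)
    (hpoly : Polyconsistent Ps F)
    (J : Set κ.out) :
    Polyconsistent Ps (Filter.generate (F.sets ∪ {J})) ∨
    ∃ Ps₀ : Set (Set (Set κ.out)), Ps₀ ⊆ Ps ∧ Ps₀.Finite ∧
      Polyconsistent (Ps \ Ps₀) (Filter.generate (F.sets ∪ {Jᶜ})) := by
  by_cases h : ∀ C, IsPolycell Ps C → (C ∩ J) ∈ conF F
  · left
    intro C hC S hS
    obtain ⟨Y, hY, hYS⟩ := gen_aux F J hS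
    obtain ⟨x, hx⟩ := h C hC Y hY
    exact ⟨x, hYS ⟨hx.1, hx.2.2⟩, hx.2.1⟩
  · right
    push_neg at h
    obtain ⟨C, hC, hCcon⟩ := h
    simp only [conF, Set.mem_setOf_eq] at hCcon
    push_neg at hCcon
    obtain ⟨X, hX, hXe⟩ := hCcon
    obtain ⟨t, htPs, htne, c, hc, hCeq⟩ := hC
    refine ⟨t, htPs, t.finite_toSet, ?_⟩
    intro D hD S hS
    obtain ⟨Y, hY, hYS⟩ := gen_aux F Jᶜ hS
    obtain ⟨s, hsPs, hsne, d, hd, hDeq⟩ := hD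
    classical
    set e : Set (Set κ.out) → Set κ.out := fun P => if P ∈ t then c P else d P with he
    have hcell : IsPolycell Ps (⋂ P ∈ (s ∪ t), e P) := by
      refine ⟨s ∪ t, ?_, htne.mono Finset.subset_union_right, e, ?_, rfl⟩
      · intro P hP
        simp only [Finset.coe_union, Set.mem_union] at hP
        rcases hP with hP | hP
        · exact (hsPs hP).1
        · exact htPs hP
      · intro P hP
        by_cases hPt : P ∈ t
        · simpa [he, hPt] using hc P hPt
        · have hPs' : P ∈ s := by
            rcases Finset.mem_union.mp hP with h1 | h1
            · exact h1
            · exact absurd h1 hPt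
          simpa [he, hPt] using hd P hPs'
    obtain ⟨x, hx⟩ := hpoly _ hcell (X ∩ Y) (F.inter_mem hX hY)
    have hxe : x ∈ ⋂ P ∈ (s ∪ t), e P := hx.2
    simp only [Set.mem_iInter] at hxe
    have hxC : x ∈ C := by
      rw [hCeq]
      simp only [Set.mem_iInter]
      intro P hP
      have := hxe P (Finset.mem_union_right _ hP)
      simpa [he, hP] using this
    have hxD : x ∈ D := by
      rw [hDeq]
      simp only [Set.mem_iInter]
      intro P hP
      have hPt : P ∉ t := fun hPt => (hsPs hP).2 hPt
      have := hxe P (Finset.mem_union_left _ hP)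
      simpa [he, hPt] using this
    have hxJc : x ∈ Jᶜ := by
      intro hxJ
      have : x ∈ X ∩ (C ∩ J) := ⟨hx.1.1, hxC, hxJ⟩
      rw [hXe] at this
      exact this
    exact ⟨x, hYS ⟨hx.1.2, hxJc⟩, hxD⟩
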